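/- arXiv:2108.06392 — 7 statements merged into one kernel-verified Lean document; each statement's English description precedes it below -/
import Mathlib

section
/- In a semiprime Archimedean f-algebra A, an element f satisfies 0 ≤ π_f ≤ I in Orth(A) (i.e., 0 ≤ f·g ≤ g for all 0 ≤ g ∈ A) if and only if 0 ≤ f and f² ≤ f. -/
/-- An Archimedean semiprime f-algebra (possibly non-unital, commutative). -/
class SemiprimeFRing (A : Type*) extends NonUnitalCommRing A, Lattice A where
  add_le_add_left : ∀ a b : A, a ≤ b → ∀ c : A, c + a ≤ c + b
  mul_nonneg : ∀ a b : A, 0 ≤ a → 0 ≤ b → 0 ≤ a * b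
  disjoint_mul_left : ∀ a b c : A, a ⊓ b = 0 → 0 ≤ c → (c * a) ⊓ b = 0
  semiprime : ∀ a : A, a * a = 0 → a = 0
  arch : ∀ a b : A, (∀ n : ℕ, n • a ≤ b) → a ≤ 0

section Aux

variable {A : Type*} [SemiprimeFRing A]

instance : CovariantClass A A (· + ·) (· ≤ ·) :=
  ⟨fun c a b h => SemiprimeFRing.add_le_add_left a b h c⟩

lemma sfr_mul_nonneg {a b : A} (ha : 0 ≤ a) (hb : 0 ≤ b) : 0 ≤ a * b :=
  SemiprimeFRing.mul_nonneg a b ha hb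

lemma sfr_mul_le_mul_left {a b : A} (c : A) (hc : 0 ≤ c) (h : a ≤ b) :
    c * a ≤ c * b := by
  have h0 : 0 ≤ c * (b - a) := sfr_mul_nonneg hc (by simpa using sub_nonneg.mpr h)
  rw [mul_sub] at h0
  exact sub_nonneg.mp h0

/-- Disjoint (hence nonnegative) elements have zero product. -/
lemma sfr_disjoint_mul_eq_zero {a b : A} (h : a ⊓ b = 0) : a * b = 0 := by
  have ha : 0 ≤ a := h ▸ inf_le_left
  have hb : 0 ≤ b := h ▸ inf_le_right
  have h1 : (a * b) ⊓ a = 0 :=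
    SemiprimeFRing.disjoint_mul_left b a a (by rwa [inf_comm]) ha
  have h2 : (b * a) ⊓ (a * b) = 0 :=
    SemiprimeFRing.disjoint_mul_left a (a * b) b (by rwa [inf_comm]) hb
  rw [mul_comm b a, inf_idem] at h2
  exact h2

end Aux

/-- In a semiprime Archimedean f-algebra `A`, an element `f` satisfies
`0 ≤ π_f ≤ I` in `Orth(A)` (i.e. `0 ≤ f*g ≤ g` for all `0 ≤ g`)
iff `0 ≤ f` and `f² ≤ f`. -/
theorem stmt0 {A : Type*} [SemiprimeFRing A] (f : A) :
    (∀ g : A, 0 ≤ g → 0 ≤ f * g ∧ f * g ≤ g) ↔ (0 ≤ f ∧ f * f ≤ f) := by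
  constructor
  · intro h
    have hfneg : 0 ≤ f⁻ := negPart_nonneg f
    have h1 : 0 ≤ f * f⁻ := (h f⁻ hfneg).1
    have hd : f⁺ * f⁻ = 0 := sfr_disjoint_mul_eq_zero (posPart_inf_negPart_eq_zero f)
    have hdecomp : f⁺ - f⁻ = f := posPart_sub_negPart f
    -- protect f⁺, f⁻ from rewriting
    set p := f⁺ with hp
    set n := f⁻ with hn
    have h2 : f * n = -(n * n) := by
      rw [← hdecomp, sub_mul, hd, zero_sub]
    have h3 : n * n = 0 := by
      rw [h2] at h1
      exact le_antisymm (neg_nonneg.mp h1) (sfr_mul_nonneg hfneg hfneg)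
    have h4 : n = 0 := SemiprimeFRing.semiprime _ h3
    have hf : 0 ≤ f := by
      rw [← hdecomp, h4, sub_zero]
      exact posPart_nonneg f
    exact ⟨hf, (h f hf).2⟩
  · rintro ⟨hf, hsq⟩ g hg
    refine ⟨sfr_mul_nonneg hf hg, ?_⟩
    set u : A := f * g - g with hu
    -- f * u ≤ 0
    have hffg : f * f * g ≤ f * g := by
      have h0 : 0 ≤ (f - f * f) * g := sfr_mul_nonneg (sub_nonneg.mpr hsq) hg
      rw [sub_mul] at h0
      exact sub_nonneg.mp h0
    have hfu : f * u ≤ 0 := by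
      have : f * u = f * f * g - f * g := by rw [hu, mul_sub, mul_assoc]
      rw [this]
      exact sub_nonpos.mpr hffg
    have hup : 0 ≤ u⁺ := posPart_nonneg u
    have hdisj : u⁺ * u⁻ = 0 := sfr_disjoint_mul_eq_zero (posPart_inf_negPart_eq_zero u)
    have hudecomp : u⁺ - u⁻ = u := posPart_sub_negPart u
    have hppz : u⁺ = 0 ↔ u ≤ 0 := posPart_eq_zero
    -- protect u⁺, u⁻ from rewriting
    set p := u⁺ with hp
    set n := u⁻ with hn
    -- f * (p * p) = 0
    have h5 : p * (f * u) ≤ 0 := by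
      have := sfr_mul_le_mul_left p hup hfu
      rwa [mul_zero] at this
    have h6 : p * (f * u) = f * (p * p) := by
      rw [← hudecomp, mul_sub, mul_sub, mul_left_comm p f p, mul_left_comm p f n,
        hdisj, mul_zero, sub_zero]
    have h7 : f * (p * p) = 0 :=
      le_antisymm (h6 ▸ h5) (sfr_mul_nonneg hf (sfr_mul_nonneg hup hup))
    -- p ≤ f * g
    have h8 : p ≤ f * g := by
      rw [hp, posPart_def]
      apply sup_le
      · rw [hu]; exact sub_le_self _ hg
      · exact sfr_mul_nonneg hf hg
    -- p³ = 0
    have h9 : p * (p * p) = 0 := by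
      have hle : p * (p * p) ≤ f * g * (p * p) := by
        rw [mul_comm p (p * p), mul_comm (f * g) (p * p)]
        exact sfr_mul_le_mul_left _ (sfr_mul_nonneg hup hup) h8
      have heq : f * g * (p * p) = g * (f * (p * p)) := by
        rw [mul_comm f g, mul_assoc]
      rw [heq, h7, mul_zero] at hle
      exact le_antisymm hle (sfr_mul_nonneg hup (sfr_mul_nonneg hup hup))
    -- semiprime: p = 0
    have h10 : (p * p) * (p * p) = 0 := by
      rw [mul_assoc, mul_left_comm p p (p*p), ← mul_assoc p p p, mul_assoc p p p,
        h9, mul_zero]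
    have h11 : p = 0 :=
      SemiprimeFRing.semiprime _ (SemiprimeFRing.semiprime _ h10)
    have hu0 : u ≤ 0 := hppz.mp h11
    rw [hu] at hu0
    exact sub_nonpos.mp hu0
end

section
/- Let A be a unital Archimedean f-algebra with unit e and B an Archimedean semiprime f-algebra. Every regular separating (disjointness preserving) operator T : A → B is almost contractive, and ω_T = |T(e)|; that is, |T(f)| ≤ |T(e)| for all f ∈ A with |f| ≤ e. -/
/-- An Archimedean (semiprime) f-algebra with a unit element. -/
class SemiprimeFRing1 (A : Type*) extends CommRing A, Lattice A where
  add_le_add_left : ∀ a b : A, a ≤ b → ∀ c : A, c + a ≤ c + b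
  mul_nonneg : ∀ a b : A, 0 ≤ a → 0 ≤ b → 0 ≤ a * b
  disjoint_mul_left : ∀ a b c : A, a ⊓ b = 0 → 0 ≤ c → (c * a) ⊓ b = 0
  semiprime : ∀ a : A, a * a = 0 → a = 0
  arch : ∀ a b : A, (∀ n : ℕ, n • a ≤ b) → a ≤ 0


open Finset

section Aux


section LatGrp
variable {α : Type*} [Lattice α] [AddCommGroup α] [AddLeftMono α] [AddRightMono α]

lemma sub_inf'' (a b : α) : a - a ⊓ b = (a - b) ⊔ 0 := by
  simp [sub_eq_add_neg, neg_inf, add_sup, sup_comm]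

lemma nsmul_le_nsmul' {a b : α} (h : a ≤ b) : ∀ n : ℕ, n • a ≤ n • b := by
  intro n; induction n with
  | zero => simp
  | succ n ih => rw [succ_nsmul, succ_nsmul]; exact add_le_add ih h

lemma nsmul_nonneg' {a : α} (h : 0 ≤ a) (n : ℕ) : 0 ≤ n • a := by
  simpa using nsmul_le_nsmul' h n

lemma sum_nonneg' (f : ℕ → α) (n : ℕ) (hf : ∀ k < n, 0 ≤ f k) :
    0 ≤ ∑ k ∈ range n, f k := by
  induction n with
  | zero => simp
  | succ n ih =>
    rw [sum_range_succ]
    exact add_nonneg (ih fun k hk => hf k (hk.trans n.lt_succ_self)) (hf n n.lt_succ_self)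

lemma inf_add_le' {a b c : α} (ha : 0 ≤ a) (hb : 0 ≤ b) (hc : 0 ≤ c) :
    a ⊓ (b + c) ≤ a ⊓ b + a ⊓ c := by
  have h1 : a ⊓ (b + c) - c = (a - c) ⊓ b := by
    rw [sub_eq_neg_add, add_inf, ← sub_eq_neg_add, ← sub_eq_neg_add, add_comm b c,
      add_sub_cancel_left]
  have h2 : (a - c) ⊓ b ≤ a ⊓ b := inf_le_inf_right b (sub_le_self a hc)
  rw [← sub_le_iff_le_add']
  refine le_inf ?_ ?_
  · calc a ⊓ (b + c) - a ⊓ b ≤ a ⊓ (b + c) - 0 := sub_le_sub_left (le_inf ha hb) _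
      _ = a ⊓ (b + c) := sub_zero _
      _ ≤ a := inf_le_left
  · calc a ⊓ (b + c) - a ⊓ b ≤ a ⊓ (b + c) - (a - c) ⊓ b := sub_le_sub_left h2 _
      _ = c := by rw [← h1]; abel

lemma inf_sum_zero' (a : α) (f : ℕ → α) (n : ℕ) (ha : 0 ≤ a)
    (hf : ∀ k < n, 0 ≤ f k) (h : ∀ k < n, a ⊓ f k = 0) :
    a ⊓ (∑ k ∈ range n, f k) = 0 := by
  induction n with
  | zero => simpa using inf_eq_right.2 ha
  | succ n ih =>
    have hS : 0 ≤ ∑ k ∈ range n, f k := sum_nonneg' f n fun k hk => hf k (hk.trans n.lt_succ_self)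
    have h1 := ih (fun k hk => hf k (hk.trans n.lt_succ_self))
      (fun k hk => h k (hk.trans n.lt_succ_self))
    refine le_antisymm ?_ (le_inf ha (sum_nonneg' f (n+1) hf))
    calc a ⊓ ∑ k ∈ range (n+1), f k = a ⊓ (∑ k ∈ range n, f k + f n) := by
          rw [sum_range_succ]
      _ ≤ a ⊓ (∑ k ∈ range n, f k) + a ⊓ f n :=
          inf_add_le' ha hS (hf n n.lt_succ_self)
      _ = 0 := by rw [h1, h n n.lt_succ_self, add_zero]

lemma abs_sum_le' (f : ℕ → α) (n : ℕ) : |∑ k ∈ range n, f k| ≤ ∑ k ∈ range n, |f k| := by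
  induction n with
  | zero => simp
  | succ n ih =>
    rw [sum_range_succ, sum_range_succ]
    exact (abs_add_le _ _).trans (add_le_add_left ih _)

lemma posPart_sub_of_disjoint {p q : α} (h : p ⊓ q = 0) : (p - q) ⊔ 0 = p := by
  rw [← sub_inf'', h, sub_zero]

lemma abs_sub_of_disjoint {p q : α} (h : p ⊓ q = 0) : |p - q| = p + q := by
  have h1 : (p - q)⁺ = p := by rw [posPart_def, posPart_sub_of_disjoint h]
  have h2 : (p - q)⁻ = q := by
    rw [negPart_def, neg_sub, posPart_sub_of_disjoint (by rw [inf_comm, h])]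
  rw [← posPart_add_negPart (p - q), h1, h2]

lemma nsmul_inf_zero {p q : α} (hp : 0 ≤ p) (hq : 0 ≤ q) (h : p ⊓ q = 0) :
    ∀ n : ℕ, (n • p) ⊓ q = 0 := by
  intro n; induction n with
  | zero => simpa using inf_eq_left.2 hq
  | succ n ih =>
    set d := ((n+1) • p) ⊓ q with hd
    have hd1 : (d - p) ⊔ 0 ≤ (n • p) ⊓ q := by
      refine sup_le (le_inf ?_ ?_) (le_inf (nsmul_nonneg' hp n) hq)
      · rw [sub_le_iff_le_add, ← succ_nsmul]; exact inf_le_left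
      · exact (sub_le_self d hp).trans inf_le_right
    have hd2 : d ≤ p := by
      have h0 : d - p ≤ 0 := le_sup_left.trans (hd1.trans_eq ih)
      exact sub_nonpos.1 h0
    have hd3 : d ≤ p ⊓ q := le_inf hd2 inf_le_right
    exact le_antisymm (hd3.trans_eq h) (le_inf (nsmul_nonneg' hp (n+1)) hq)

lemma nsmul_inf_nsmul_zero {p q : α} (hp : 0 ≤ p) (hq : 0 ≤ q) (h : p ⊓ q = 0) (n : ℕ) :
    (n • p) ⊓ (n • q) = 0 := by
  have h1 : (n • p) ⊓ q = 0 := nsmul_inf_zero hp hq h n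
  have h2 : (n • q) ⊓ (n • p) = 0 :=
    nsmul_inf_zero hq (nsmul_nonneg' hp n) (by rw [inf_comm, h1]) n
  rw [inf_comm, h2]

lemma abs_nsmul_eq (n : ℕ) (x : α) : |n • x| = n • |x| := by
  have h1 : (n • x⁺) ⊓ (n • x⁻) = 0 :=
    nsmul_inf_nsmul_zero (posPart_nonneg x) (negPart_nonneg x)
      (posPart_inf_negPart_eq_zero x) n
  calc |n • x| = |n • x⁺ - n • x⁻| := by rw [← smul_sub, posPart_sub_negPart]
    _ = n • x⁺ + n • x⁻ := abs_sub_of_disjoint h1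
    _ = n • |x| := by rw [← smul_add, posPart_add_negPart]

lemma abs_add_of_disjoint {x y : α} (h : |x| ⊓ |y| = 0) : |x + y| ≤ |x| ⊔ |y| := by
  calc |x + y| ≤ |x| + |y| := abs_add_le x y
    _ = |x| ⊓ |y| + (|x| ⊔ |y|) := (inf_add_sup _ _).symm
    _ = |x| ⊔ |y| := by rw [h, zero_add]

lemma step_split {Y D t : α} (h : |t| ⊓ |D| = 0) : |Y - D + t| ≤ |Y - D| ⊔ |Y + t| := by
  have h1 : |Y - D + t| ≤ |t| + |Y - D| := by
    rw [add_comm (|t|)]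
    exact (abs_add_le (Y - D) t)
  have h2 : |Y - D + t| ≤ |D| + |Y + t| := by
    have : Y - D + t = Y + t + -D := by abel
    rw [this, add_comm (|D|)]
    exact (abs_add_le (Y + t) (-D)).trans_eq (by rw [abs_neg])
  calc |Y - D + t| ≤ (|t| + |Y - D|) ⊓ (|D| + |Y + t|) := le_inf h1 h2
    _ ≤ (|t| + (|Y - D| ⊔ |Y + t|)) ⊓ (|D| + (|Y - D| ⊔ |Y + t|)) :=
        inf_le_inf (add_le_add_right le_sup_left _) (add_le_add_right le_sup_right _)
    _ = |t| ⊓ |D| + (|Y - D| ⊔ |Y + t|) := by rw [inf_add]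
    _ = |Y - D| ⊔ |Y + t| := by rw [h, zero_add]

lemma key_sum_bound (t : ℕ → α) (s M : α) (hM : 0 ≤ M) :
    ∀ n : ℕ, (∀ k < n, |t k| ≤ M) →
      (∀ k j, k < j → j < n → |t j| ⊓ |s - t k| = 0) →
      |∑ k ∈ range n, t k| ≤ n • |s| + M := by
  intro n
  induction n with
  | zero => intro _ _; simpa using hM
  | succ n ih =>
    intro ht hd
    have hA : |∑ k ∈ range n, t k| ≤ n • |s| + M :=
      ih (fun k hk => ht k (hk.trans n.lt_succ_self))
        (fun k j h1 h2 => hd k j h1 (h2.trans n.lt_succ_self))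
    set A := ∑ k ∈ range n, t k with hAdef
    have hD : n • s - A = ∑ k ∈ range n, (s - t k) := by
      rw [Finset.sum_sub_distrib, Finset.sum_const, Finset.card_range]
    have hdisj : |t n| ⊓ |n • s - A| = 0 := by
      refine le_antisymm ?_ (le_inf (abs_nonneg _) (abs_nonneg _))
      calc |t n| ⊓ |n • s - A| ≤ |t n| ⊓ ∑ k ∈ range n, |s - t k| := by
            refine inf_le_inf_left _ ?_
            rw [hD]; exact abs_sum_le' _ n
        _ = 0 := inf_sum_zero' _ _ n (abs_nonneg _) (fun k _ => abs_nonneg _)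
            (fun k hk => hd k n hk n.lt_succ_self)
    have hs1 : A = n • s - (n • s - A) := by abel
    calc |∑ k ∈ range (n+1), t k| = |n • s - (n • s - A) + t n| := by
          rw [sum_range_succ, ← hs1]
      _ ≤ |n • s - (n • s - A)| ⊔ |n • s + t n| := step_split hdisj
      _ = |A| ⊔ |n • s + t n| := by rw [← hs1]
      _ ≤ (n • |s| + M) ⊔ (n • |s| + M) := by
          refine sup_le_sup hA ?_
          exact (abs_add_le _ _).trans
            (add_le_add ((abs_nsmul_eq n s).le) (ht n n.lt_succ_self))
      _ = n • |s| + M := sup_idem _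
      _ ≤ (n+1) • |s| + M := by
          rw [succ_nsmul]
          exact add_le_add_left (le_add_of_nonneg_right (abs_nonneg s)) M

end LatGrp


instance (priority := 100) SemiprimeFRing1.toAddLeftMono {A : Type*} [SemiprimeFRing1 A] :
    AddLeftMono A :=
  ⟨fun c _ _ h => SemiprimeFRing1.add_le_add_left _ _ h c⟩

instance (priority := 100) SemiprimeFRing1.toAddRightMono {A : Type*} [SemiprimeFRing1 A] :
    AddRightMono A :=
  ⟨fun c a b h => by
    have := SemiprimeFRing1.add_le_add_left a b h c
    simpa only [Function.swap, add_comm] using this⟩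

instance (priority := 100) SemiprimeFRing.toAddLeftMono {B : Type*} [SemiprimeFRing B] :
    AddLeftMono B :=
  ⟨fun c _ _ h => SemiprimeFRing.add_le_add_left _ _ h c⟩

instance (priority := 100) SemiprimeFRing.toAddRightMono {B : Type*} [SemiprimeFRing B] :
    AddRightMono B :=
  ⟨fun c a b h => by
    have := SemiprimeFRing.add_le_add_left a b h c
    simpa only [Function.swap, add_comm] using this⟩

section ARing
variable {A : Type*} [SemiprimeFRing1 A]

lemma mul_eq_zero_of_inf' {a b : A} (ha : 0 ≤ a) (hb : 0 ≤ b) (h : a ⊓ b = 0) :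
    a * b = 0 := by
  have h1 : (b * a) ⊓ b = 0 := SemiprimeFRing1.disjoint_mul_left a b b h hb
  have h2 : (a * b) ⊓ (b * a) = 0 :=
    SemiprimeFRing1.disjoint_mul_left b (b * a) a (by rw [inf_comm]; exact h1) ha
  rw [mul_comm a b] at h2 ⊢
  rwa [inf_idem] at h2

lemma sq_nonneg'' (a : A) : 0 ≤ a * a := by
  have h0 : a⁺ * a⁻ = 0 :=
    mul_eq_zero_of_inf' (posPart_nonneg a) (negPart_nonneg a) (posPart_inf_negPart_eq_zero a)
  have e : a * a = a⁺ * a⁺ + a⁻ * a⁻ - 2 * (a⁺ * a⁻) := by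
    calc a * a = (a⁺ - a⁻) * (a⁺ - a⁻) := by rw [posPart_sub_negPart]
      _ = a⁺ * a⁺ + a⁻ * a⁻ - 2 * (a⁺ * a⁻) := by ring
  rw [e, h0, mul_zero, sub_zero]
  exact add_nonneg (SemiprimeFRing1.mul_nonneg _ _ (posPart_nonneg a) (posPart_nonneg a))
    (SemiprimeFRing1.mul_nonneg _ _ (negPart_nonneg a) (negPart_nonneg a))

lemma one_nonneg'' : (0 : A) ≤ 1 := by simpa using sq_nonneg'' (1 : A)

lemma le_one_of_sq {f : A} (hf : 0 ≤ f) (h : f * f ≤ f) : f ≤ 1 := by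
  have hgd : (f - 1)⁺ ⊓ (f - 1)⁻ = 0 := posPart_inf_negPart_eq_zero (f - 1)
  have hg0 : 0 ≤ (f - 1)⁺ := posPart_nonneg _
  have hd0 : 0 ≤ (f - 1)⁻ := negPart_nonneg _
  have e : (f - 1)⁺ - (f - 1)⁻ = f - 1 := posPart_sub_negPart (f - 1)
  have hgd0 : (f - 1)⁺ * (f - 1)⁻ = 0 := mul_eq_zero_of_inf' hg0 hd0 hgd
  have key : 0 ≤ f - f * f := sub_nonneg.2 h
  have e2 : f - f * f = (f - 1)⁻ - ((f - 1)⁺ + ((f - 1)⁺ * (f - 1)⁺ + (f - 1)⁻ * (f - 1)⁻)) := by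
    have hf1 : f = 1 + (f - 1)⁺ - (f - 1)⁻ := by linear_combination -e
    linear_combination (-(f + (f - 1)⁺ - (f - 1)⁻)) * hf1 + (2 : A) * hgd0
  rw [e2] at key
  have h3 : (f - 1)⁺ + ((f - 1)⁺ * (f - 1)⁺ + (f - 1)⁻ * (f - 1)⁻) ≤ (f - 1)⁻ :=
    sub_nonneg.1 key
  have h4 : (f - 1)⁺ ≤ (f - 1)⁻ :=
    (le_add_of_nonneg_right (add_nonneg (sq_nonneg'' _) (sq_nonneg'' _))).trans h3
  have h5 : (f - 1)⁺ = 0 := le_antisymm (by rw [← hgd]; exact le_inf le_rfl h4) hg0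
  have h6 : f - 1 ≤ 0 := by
    rw [← e, h5, zero_sub]
    exact neg_nonpos.2 hd0
  exact sub_nonpos.1 h6

end ARing

section Core
variable {A B : Type*} [SemiprimeFRing1 A] [SemiprimeFRing B]

lemma Tadd' (T P Q : A → B) (hP : ∀ x y, P (x + y) = P x + P y)
    (hQ : ∀ x y, Q (x + y) = Q x + Q y) (hT : ∀ x, T x = P x - Q x) :
    ∀ x y, T (x + y) = T x + T y := fun x y => by rw [hT, hT, hT, hP, hQ]; abel

lemma Tzero' (T P Q : A → B) (hP : ∀ x y, P (x + y) = P x + P y)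
    (hQ : ∀ x y, Q (x + y) = Q x + Q y) (hT : ∀ x, T x = P x - Q x) : T 0 = 0 := by
  have h := Tadd' T P Q hP hQ hT 0 0
  rw [add_zero] at h
  exact (left_eq_add.1 h)

lemma Tsub' (T P Q : A → B) (hP : ∀ x y, P (x + y) = P x + P y)
    (hQ : ∀ x y, Q (x + y) = Q x + Q y) (hT : ∀ x, T x = P x - Q x) :
    ∀ x y, T (x - y) = T x - T y := fun x y => by
  have h := Tadd' T P Q hP hQ hT (x - y) y
  rw [sub_add_cancel] at h
  exact eq_sub_of_add_eq h.symm

lemma core_mono (T P Q : A → B) (hP : ∀ x y, P (x + y) = P x + P y)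
    (hQ : ∀ x y, Q (x + y) = Q x + Q y)
    (hPpos : ∀ x : A, 0 ≤ x → 0 ≤ P x) (hQpos : ∀ x : A, 0 ≤ x → 0 ≤ Q x)
    (hT : ∀ x, T x = P x - Q x)
    (hsep : ∀ f g : A, |f| ⊓ |g| = 0 → |T f| ⊓ |T g| = 0)
    {u v : A} (hu : 0 ≤ u) (huv : u ≤ v) : |T u| ≤ |T v| := by
  have hv : 0 ≤ v := hu.trans huv
  have hTadd := Tadd' T P Q hP hQ hT
  have hT0 := Tzero' T P Q hP hQ hT
  have hTsub := Tsub' T P Q hP hQ hT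
  have hPmono : ∀ {x y : A}, x ≤ y → P x ≤ P y := by
    intro x y h
    have e : P y = P x + P (y - x) := by rw [← hP, add_sub_cancel]
    rw [e]
    exact le_add_of_nonneg_right (hPpos _ (sub_nonneg.2 h))
  have hQmono : ∀ {x y : A}, x ≤ y → Q x ≤ Q y := by
    intro x y h
    have e : Q y = Q x + Q (y - x) := by rw [← hQ, add_sub_cancel]
    rw [e]
    exact le_add_of_nonneg_right (hQpos _ (sub_nonneg.2 h))
  have hTn : ∀ (m : ℕ) (x : A), T (m • x) = m • T x := by
    intro m x
    induction m with
    | zero => simpa using hT0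
    | succ m ih => rw [succ_nsmul, succ_nsmul, hTadd, ih]
  have hbound : ∀ a : A, 0 ≤ a → a ≤ v → |T a| ≤ P v + Q v := by
    intro a ha hav
    have h1 : |P a - Q a| ≤ |P a| + |Q a| := by
      have := abs_add_le (P a) (-(Q a))
      rwa [← sub_eq_add_neg, abs_neg] at this
    calc |T a| = |P a - Q a| := by rw [hT]
      _ ≤ |P a| + |Q a| := h1
      _ = P a + Q a := by rw [abs_of_nonneg (hPpos a ha), abs_of_nonneg (hQpos a ha)]
      _ ≤ P v + Q v := add_le_add (hPmono hav) (hQmono hav)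
  -- Archimedean reduction
  rw [← sub_nonpos]
  refine SemiprimeFRing.arch _ (P v + Q v) ?_
  intro n
  rw [smul_sub, sub_le_iff_le_add]
  -- goal : n • |T u| ≤ P v + Q v + n • |T v|
  set p : ℕ → A := fun k => (n • u - k • v) ⊔ 0 with hpdef
  set a : ℕ → A := fun k => p k ⊓ v with hadef
  have hpk : ∀ k : ℕ, p k = (n • u - k • v) ⊔ 0 := fun _ => rfl
  have hak : ∀ k : ℕ, a k = p k ⊓ v := fun _ => rfl
  have hp0 : ∀ k, 0 ≤ p k := fun k => le_sup_right
  have ha0 : ∀ k, 0 ≤ a k := fun k => le_inf (hp0 k) hv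
  have hav' : ∀ k, a k ≤ v := fun k => inf_le_right
  have hps : ∀ k, p (k + 1) = (p k - v) ⊔ 0 := by
    intro k
    have e1 : n • u - (k + 1) • v = (n • u - k • v) - v := by
      rw [succ_nsmul]; abel
    have e0 : p k - v = ((n • u - k • v) - v) ⊔ (0 - v) := by
      rw [hpk, sub_eq_add_neg (((n • u - k • v)) ⊔ 0) v, sup_add, ← sub_eq_add_neg,
        ← sub_eq_add_neg]
    calc p (k + 1) = ((n • u - k • v) - v) ⊔ 0 := by rw [hpk, e1]
      _ = (((n • u - k • v) - v) ⊔ (0 - v)) ⊔ 0 := by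
          rw [sup_assoc, zero_sub, sup_eq_right.2 (neg_nonpos.2 hv)]
      _ = (p k - v) ⊔ 0 := by rw [e0]
  have hstep : ∀ k, a k + p (k + 1) = p k := by
    intro k
    have e := sub_inf'' (p k) v
    rw [hps k, ← e, hak]
    abel
  have hpdec : ∀ k, p (k + 1) ≤ p k := by
    intro k
    rw [← hstep k]
    exact le_add_of_nonneg_left (ha0 k)
  have hpmono : ∀ j k : ℕ, k ≤ j → p j ≤ p k := by
    intro j k hkj
    induction j with
    | zero => rw [Nat.le_zero.1 hkj]
    | succ j ih =>
      rcases Nat.lt_or_ge k (j + 1) with h | h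
      · exact (hpdec j).trans (ih (Nat.lt_succ_iff.1 h))
      · rw [le_antisymm hkj h]
  have hdis : ∀ k, (v - a k) ⊓ p (k + 1) = 0 := by
    intro k
    have e1 : v - a k = (v - p k) ⊔ 0 := by
      rw [hak, inf_comm, sub_inf'']
    have e2 : p (k + 1) = (p k - v) ⊔ 0 := hps k
    rw [e1, e2, ← neg_sub (p k) v, ← negPart_def, ← posPart_def, inf_comm]
    exact posPart_inf_negPart_eq_zero _
  have hsum : ∀ m : ℕ, (∑ k ∈ range m, a k) + p m = p 0 := by
    intro m
    induction m with
    | zero => simp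
    | succ m ih =>
      rw [sum_range_succ, add_assoc, hstep m, ih]
  have hp00 : p 0 = n • u := by
    rw [hpk]
    simp only [zero_smul, sub_zero]
    exact sup_eq_left.2 (nsmul_nonneg' hu n)
  have hpn : p n = 0 := by
    rw [hpk]
    exact sup_eq_right.2 (sub_nonpos.2 (nsmul_le_nsmul' huv n))
  have hsumu : ∑ k ∈ range n, a k = n • u := by
    have := hsum n
    rw [hpn, add_zero, hp00] at this
    exact this
  have hdisj2 : ∀ k j, k < j → j < n → |T (a j)| ⊓ |T v - T (a k)| = 0 := by
    intro k j hkj _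
    have h1 : a j ⊓ (v - a k) = 0 := by
      refine le_antisymm ?_ (le_inf (ha0 j) (sub_nonneg.2 (hav' k)))
      calc a j ⊓ (v - a k) ≤ p (k + 1) ⊓ (v - a k) :=
            inf_le_inf_right _ (inf_le_left.trans (hpmono j (k + 1) hkj))
        _ = 0 := by rw [inf_comm]; exact hdis k
    have h2 := hsep (a j) (v - a k) (by
      rw [abs_of_nonneg (ha0 j), abs_of_nonneg (sub_nonneg.2 (hav' k))]
      exact h1)
    rwa [hTsub v (a k)] at h2
  have hTsumf : ∀ m : ℕ, T (∑ k ∈ range m, a k) = ∑ k ∈ range m, T (a k) := by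
    intro m
    induction m with
    | zero => simpa using hT0
    | succ m ih => rw [sum_range_succ, sum_range_succ, hTadd, ih]
  have hkey := key_sum_bound (fun k => T (a k)) (T v) (P v + Q v)
    (add_nonneg (hPpos v hv) (hQpos v hv)) n
    (fun k _ => hbound (a k) (ha0 k) (hav' k))
    (fun k j h1 h2 => hdisj2 k j h1 h2)
  calc n • |T u| = |n • T u| := (abs_nsmul_eq n (T u)).symm
    _ = |T (n • u)| := by rw [hTn n u]
    _ = |∑ k ∈ range n, T (a k)| := by rw [← hTsumf, hsumu]
    _ ≤ n • |T v| + (P v + Q v) := hkey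
    _ = P v + Q v + n • |T v| := by abel

end Core

end Aux
/-- Every regular separating operator from a unital f-algebra into a semiprime
f-algebra is almost contractive, with `ω_T = |T(e)|`. -/
theorem stmt3 {A B : Type*} [SemiprimeFRing1 A] [SemiprimeFRing B] (T : A → B)
    (hreg : ∃ P Q : A → B, (∀ x y : A, P (x + y) = P x + P y) ∧
      (∀ x y : A, Q (x + y) = Q x + Q y) ∧ (∀ x : A, 0 ≤ x → 0 ≤ P x) ∧
      (∀ x : A, 0 ≤ x → 0 ≤ Q x) ∧ ∀ x : A, T x = P x - Q x)
    (hsep : ∀ f g : A, |f| ⊓ |g| = 0 → |T f| ⊓ |T g| = 0) :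
    (∀ f : A, |f| ≤ 1 → |T f| ≤ |T 1|) ∧
      IsLUB {x : B | ∃ f : A, 0 ≤ f ∧ f * f ≤ f ∧ x = |T f|} |T 1| := by
  obtain ⟨P, Q, hP, hQ, hPp, hQp, hT⟩ := hreg
  have hone : (0 : A) ≤ 1 := one_nonneg''
  have main : ∀ f : A, |f| ≤ 1 → |T f| ≤ |T 1| := by
    intro f hf
    have hfp : f⁺ ≤ 1 := by
      rw [posPart_def]
      exact sup_le ((le_abs_self f).trans hf) ((abs_nonneg f).trans hf)
    have hfn : f⁻ ≤ 1 := by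
      rw [negPart_def]
      exact sup_le ((neg_le_abs f).trans hf) ((abs_nonneg f).trans hf)
    have h1 : |T f⁺| ≤ |T 1| :=
      core_mono T P Q hP hQ hPp hQp hT hsep (posPart_nonneg f) hfp
    have h2 : |T f⁻| ≤ |T 1| :=
      core_mono T P Q hP hQ hPp hQp hT hsep (negPart_nonneg f) hfn
    have hdisj : |T f⁺| ⊓ |T f⁻| = 0 := hsep _ _ (by
      rw [abs_of_nonneg (posPart_nonneg f), abs_of_nonneg (negPart_nonneg f)]
      exact posPart_inf_negPart_eq_zero f)
    have e : T f = T f⁺ - T f⁻ := by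
      rw [← Tsub' T P Q hP hQ hT, posPart_sub_negPart]
    have h3 : |T f| ≤ |T f⁺| ⊔ |T f⁻| := by
      have h4 := abs_add_of_disjoint (x := T f⁺) (y := -(T f⁻))
        (by rw [abs_neg]; exact hdisj)
      rw [← sub_eq_add_neg, abs_neg, ← e] at h4
      exact h4
    exact h3.trans (sup_le h1 h2)
  refine ⟨main, ?_, ?_⟩
  · rintro x ⟨f, hf0, hfsq, rfl⟩
    exact main f (by rw [abs_of_nonneg hf0]; exact le_one_of_sq hf0 hfsq)
  · intro b hb
    exact hb ⟨1, hone, le_of_eq (mul_one 1), rfl⟩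
end

section
/- Let A be the f-algebra of piecewise polynomial functions on [0,∞) vanishing at 0, and T : A → ℝ defined by T(f) = f'(0⁺) (the right derivative at 0). Then T is a positive linear separating operator, but the set {T(f) : f ∈ A, 0 ≤ f ≤ 1} is unbounded in ℝ, so T is not almost contractive. -/
/-- `f : ℝ → ℝ` is piecewise polynomial on `[0,∞)`: away from a finite set of
breakpoints, `f` locally agrees with a polynomial. -/
def IsPiecewisePoly (f : ℝ → ℝ) : Prop :=
  ∃ s : Finset ℝ, ∀ x ∈ Set.Ici (0 : ℝ) \ (s : Set ℝ), ∃ ε > (0 : ℝ),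
    ∃ p : Polynomial ℝ, ∀ y ∈ Set.Ici (0 : ℝ), |y - x| < ε → f y = Polynomial.eval y p

open Set Filter Polynomial Topology

/-- A continuous piecewise polynomial function agrees with a single polynomial on a
right neighborhood of `0`. -/
lemma pp_key {f : ℝ → ℝ} (hc : ContinuousOn f (Set.Ici 0)) (hpp : IsPiecewisePoly f) :
    ∃ p : Polynomial ℝ, ∃ δ > (0:ℝ), ∀ y ∈ Set.Ico 0 δ, f y = Polynomial.eval y p := by
  classical
  obtain ⟨s, hs⟩ := hpp
  -- choose δ > 0 with (0, δ) disjoint from the breakpoints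
  obtain ⟨δ, hδ0, hδs⟩ : ∃ δ > (0:ℝ), ∀ y ∈ Set.Ioo (0:ℝ) δ, y ∉ s := by
    by_cases h : (s.filter (fun x => 0 < x)).Nonempty
    · refine ⟨(s.filter (fun x => 0 < x)).min' h, ?_, ?_⟩
      · have hm := (s.filter (fun x => 0 < x)).min'_mem h
        exact (Finset.mem_filter.1 hm).2
      · intro y hy hys
        have : (s.filter (fun x => 0 < x)).min' h ≤ y :=
          Finset.min'_le _ _ (Finset.mem_filter.2 ⟨hys, hy.1⟩)
        exact absurd hy.2 (not_lt.2 this)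
    · exact ⟨1, one_pos, fun y hy hys => h ⟨y, Finset.mem_filter.2 ⟨hys, hy.1⟩⟩⟩
  set U : Set ℝ := Set.Ioo 0 δ with hUdef
  have hU : ∀ x ∈ U, x ∈ Set.Ici (0:ℝ) \ (s : Set ℝ) := fun x hx => ⟨le_of_lt hx.1, hδs x hx⟩
  have ha : (δ/2) ∈ U := ⟨by linarith, by linarith⟩
  obtain ⟨εa, hεa, pa, hpa⟩ := hs (δ/2) (hU _ ha)
  set P : Set ℝ := {x | ∃ ε > (0:ℝ), ∀ y, |y - x| < ε → y ∈ U → f y = Polynomial.eval y pa}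
    with hPdef
  have hPopen : IsOpen P := by
    rw [Metric.isOpen_iff]
    rintro x ⟨ε, hε, hx⟩
    refine ⟨ε/2, by linarith, fun z hz => ?_⟩
    rw [Metric.mem_ball, Real.dist_eq] at hz
    refine ⟨ε/2, by linarith, fun y hy hyU => hx y ?_ hyU⟩
    have : |y - x| ≤ |y - z| + |z - x| := abs_sub_le _ _ _
    linarith
  have haP : (δ/2) ∈ P := ⟨εa, hεa, fun y hy hyU => hpa y (le_of_lt hyU.1) hy⟩
  have hclosed : ∀ x ∈ U, x ∈ closure P → x ∈ P := by
    intro x hxU hxcl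
    obtain ⟨εx, hεx, px, hpx⟩ := hs x (hU x hxU)
    obtain ⟨ρ, hρ, hball⟩ := Metric.isOpen_iff.1 isOpen_Ioo x hxU
    set η := min εx ρ with hηdef
    have hη : 0 < η := lt_min hεx hρ
    obtain ⟨z, hzP, hzdist⟩ := Metric.mem_closure_iff.1 hxcl (η/2) (by linarith)
    rw [Real.dist_eq] at hzdist
    obtain ⟨εz, hεz, hz⟩ := hzP
    have hzU : z ∈ U := hball (by
      rw [Metric.mem_ball, Real.dist_eq, abs_sub_comm]
      have : η ≤ ρ := min_le_right _ _
      linarith)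
    obtain ⟨σ, hσ, hσball⟩ := Metric.isOpen_iff.1 isOpen_Ioo z hzU
    set τ := min (min εz σ) (η/2) with hτdef
    have hτ : 0 < τ := lt_min (lt_min hεz hσ) (by linarith)
    have hinf : {t : ℝ | Polynomial.eval t pa = Polynomial.eval t px}.Infinite := by
      apply Set.Infinite.mono (s := Set.Ioo (z - τ) (z + τ))
      · intro y hy
        have hyz : |y - z| < τ := by
          rw [abs_lt]; constructor <;> [linarith [hy.1]; linarith [hy.2]]
        have hyU : y ∈ U := hσball (by
          rw [Metric.mem_ball, Real.dist_eq]
          exact lt_of_lt_of_le hyz (le_trans (min_le_left _ _) (min_le_right _ _)))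
        have h1 : f y = Polynomial.eval y pa :=
          hz y (lt_of_lt_of_le hyz (le_trans (min_le_left _ _) (min_le_left _ _))) hyU
        have h2 : f y = Polynomial.eval y px := by
          apply hpx y (le_of_lt hyU.1)
          have hxz : |y - x| ≤ |y - z| + |x - z| := by
            have := abs_sub_le y z x; rwa [abs_sub_comm z x] at this
          have hτη : τ ≤ η/2 := min_le_right _ _
          have hηε : η ≤ εx := min_le_left _ _
          linarith
        simp only [Set.mem_setOf_eq]
        rw [← h1, ← h2]
      · exact Set.infinite_coe_iff.1 (Set.Ioo.infinite (by linarith))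
    have hpapx : pa = px := Polynomial.eq_of_infinite_eval_eq pa px hinf
    exact ⟨εx, hεx, fun y hy hyU => by rw [hpapx]; exact hpx y (le_of_lt hyU.1) hy⟩
  -- clopen argument on the subtype
  haveI : PreconnectedSpace ↥U := Subtype.preconnectedSpace isPreconnected_Ioo
  have hEuniv : (Subtype.val ⁻¹' P : Set ↥U) = Set.univ := by
    apply IsClopen.eq_univ
    · constructor
      · apply isClosed_of_closure_subset
        intro u hu
        exact hclosed u u.2 (Continuous.closure_preimage_subset continuous_subtype_val P hu)
      · exact hPopen.preimage continuous_subtype_val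
    · exact ⟨⟨δ/2, ha⟩, haP⟩
  have hfU : ∀ x ∈ U, f x = Polynomial.eval x pa := by
    intro x hx
    have hxE : (⟨x, hx⟩ : ↥U) ∈ (Subtype.val ⁻¹' P : Set ↥U) := by
      rw [hEuniv]; exact Set.mem_univ _
    obtain ⟨ε, hε, hPx⟩ := hxE
    exact hPx x (by simpa using hε) hx
  have h0 : f 0 = Polynomial.eval 0 pa := by
    have h1 : Filter.Tendsto f (𝓝[>] (0:ℝ)) (𝓝 (f 0)) :=
      ((hc 0 Set.self_mem_Ici).tendsto).mono_left
        (nhdsWithin_mono 0 (fun y (hy : (0:ℝ) < y) => show (0:ℝ) ≤ y from le_of_lt hy))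
    have h3 : Filter.Tendsto (fun y => Polynomial.eval y pa) (𝓝[>] (0:ℝ))
        (𝓝 (Polynomial.eval 0 pa)) :=
      ((pa.continuous_aeval).tendsto 0).mono_left nhdsWithin_le_nhds |>.congr (by simp)
    have h2 : Filter.Tendsto f (𝓝[>] (0:ℝ)) (𝓝 (Polynomial.eval 0 pa)) := by
      refine h3.congr' ?_
      have hmem : Set.Ioo (0:ℝ) δ ∈ 𝓝[>] (0:ℝ) :=
        Ioo_mem_nhdsGT_of_mem ⟨le_rfl, hδ0⟩
      filter_upwards [hmem] with y hy
      exact (hfU y hy).symm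
    exact tendsto_nhds_unique h1 h2
  refine ⟨pa, δ, hδ0, fun y hy => ?_⟩
  rcases eq_or_lt_of_le hy.1 with h | h
  · rw [← h]; exact h0
  · exact hfU y ⟨h, hy.2⟩

lemma pp_hasDeriv {f : ℝ → ℝ} {p : Polynomial ℝ} {δ : ℝ} (hδ : 0 < δ)
    (h : ∀ y ∈ Set.Ico 0 δ, f y = Polynomial.eval y p) :
    HasDerivWithinAt f (Polynomial.eval 0 (Polynomial.derivative p)) (Set.Ici 0) 0 := by
  have hp : HasDerivWithinAt (fun y => Polynomial.eval y p)
      (Polynomial.eval 0 (Polynomial.derivative p)) (Set.Ici 0) 0 :=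
    (p.hasDerivAt 0).hasDerivWithinAt
  refine hp.congr_of_eventuallyEq ?_ (h 0 ⟨le_rfl, hδ⟩)
  have hmem : Set.Iio δ ∈ 𝓝[Set.Ici (0:ℝ)] (0:ℝ) := nhdsWithin_le_nhds (Iio_mem_nhds hδ)
  filter_upwards [hmem, self_mem_nhdsWithin] with y h1 h2
  exact h y ⟨h2, h1⟩

/-- On the f-algebra `A` of piecewise polynomial functions on `[0,∞)` vanishing at `0`,
the operator `T f = f'(0⁺)` is well defined (the right derivative at `0` exists),
linear, positive and separating, but `{T f : f ∈ A, 0 ≤ f ≤ 1}` is unbounded, so `T` is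
not almost contractive. -/
theorem stmt4 :
    ∀ Amem : (ℝ → ℝ) → Prop, (Amem = fun f => ContinuousOn f (Set.Ici 0) ∧ f 0 = 0 ∧
        IsPiecewisePoly f) →
    ∀ T : (ℝ → ℝ) → ℝ, (T = fun f => derivWithin f (Set.Ici 0) 0) →
      (∀ f, Amem f → ∃ L : ℝ, HasDerivWithinAt f L (Set.Ici 0) 0) ∧
      (∀ f g, Amem f → Amem g → T (f + g) = T f + T g) ∧
      (∀ (c : ℝ) f, Amem f → T (c • f) = c * T f) ∧
      (∀ f, Amem f → (∀ x ∈ Set.Ici (0 : ℝ), 0 ≤ f x) → 0 ≤ T f) ∧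
      (∀ f g, Amem f → Amem g → (∀ x ∈ Set.Ici (0 : ℝ), f x * g x = 0) →
        T f * T g = 0) ∧
      ¬ BddAbove {y : ℝ | ∃ f, Amem f ∧ (∀ x ∈ Set.Ici (0 : ℝ), 0 ≤ f x ∧ f x ≤ 1) ∧
        y = T f} := by
  intro Amem hAmem T hT
  subst hAmem hT
  have udw : UniqueDiffWithinAt ℝ (Set.Ici (0:ℝ)) 0 := uniqueDiffOn_Ici 0 0 Set.self_mem_Ici
  have hex : ∀ f, (ContinuousOn f (Set.Ici 0) ∧ f 0 = 0 ∧ IsPiecewisePoly f) →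
      ∃ L : ℝ, HasDerivWithinAt f L (Set.Ici 0) 0 := by
    intro f hf
    obtain ⟨p, δ, hδ, hag⟩ := pp_key hf.1 hf.2.2
    exact ⟨_, pp_hasDeriv hδ hag⟩
  refine ⟨hex, ?_, ?_, ?_, ?_, ?_⟩
  · -- additivity
    intro f g hf hg
    obtain ⟨Lf, hLf⟩ := hex f hf
    obtain ⟨Lg, hLg⟩ := hex g hg
    have : HasDerivWithinAt (f + g) (Lf + Lg) (Set.Ici 0) 0 := hLf.add hLg
    show derivWithin (f + g) (Set.Ici 0) 0 = derivWithin f (Set.Ici 0) 0 + derivWithin g (Set.Ici 0) 0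
    rw [this.derivWithin udw, hLf.derivWithin udw, hLg.derivWithin udw]
  · -- homogeneity
    intro c f hf
    obtain ⟨Lf, hLf⟩ := hex f hf
    have : HasDerivWithinAt (c • f) (c • Lf) (Set.Ici 0) 0 := hLf.const_smul c
    show derivWithin (c • f) (Set.Ici 0) 0 = c * derivWithin f (Set.Ici 0) 0
    rw [this.derivWithin udw, hLf.derivWithin udw, smul_eq_mul]
  · -- positivity
    intro f hf hpos
    obtain ⟨Lf, hLf⟩ := hex f hf
    show (0:ℝ) ≤ derivWithin f (Set.Ici 0) 0
    rw [hLf.derivWithin udw]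
    have hslope := hasDerivWithinAt_iff_tendsto_slope.1 hLf
    rw [Set.Ici_sdiff_left] at hslope
    refine ge_of_tendsto hslope ?_
    filter_upwards [self_mem_nhdsWithin] with y hy
    rw [slope_def_field, hf.2.1]
    have : (0:ℝ) < y := hy
    have h1 : 0 ≤ f y := hpos y (le_of_lt this)
    apply div_nonneg <;> simp <;> linarith
  · -- separating
    intro f g hf hg hfg
    obtain ⟨p, δ1, hδ1, hagf⟩ := pp_key hf.1 hf.2.2
    obtain ⟨q, δ2, hδ2, hagg⟩ := pp_key hg.1 hg.2.2
    have hTf : derivWithin f (Set.Ici 0) 0 = Polynomial.eval 0 (Polynomial.derivative p) :=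
      (pp_hasDeriv hδ1 hagf).derivWithin udw
    have hTg : derivWithin g (Set.Ici 0) 0 = Polynomial.eval 0 (Polynomial.derivative q) :=
      (pp_hasDeriv hδ2 hagg).derivWithin udw
    have hpq : p * q = 0 := by
      apply Polynomial.eq_of_infinite_eval_eq
      apply Set.Infinite.mono (s := Set.Ioo 0 (min δ1 δ2))
      · intro y hy
        have hy1 : y ∈ Set.Ico (0:ℝ) δ1 := ⟨le_of_lt hy.1, lt_of_lt_of_le hy.2 (min_le_left _ _)⟩
        have hy2 : y ∈ Set.Ico (0:ℝ) δ2 := ⟨le_of_lt hy.1, lt_of_lt_of_le hy.2 (min_le_right _ _)⟩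
        have := hfg y (le_of_lt hy.1)
        rw [hagf y hy1, hagg y hy2] at this
        simpa using this
      · exact Set.infinite_coe_iff.1 (Set.Ioo.infinite (lt_min hδ1 hδ2))
    show derivWithin f (Set.Ici 0) 0 * derivWithin g (Set.Ici 0) 0 = 0
    rcases mul_eq_zero.1 hpq with h | h
    · rw [hTf, h]; simp
    · rw [hTg, h]; simp
  · -- unboundedness
    rw [not_bddAbove_iff]
    intro B
    set n : ℝ := max B 0 + 1 with hndef
    have hn : 0 < n := by
      have : (0:ℝ) ≤ max B 0 := le_max_right _ _
      linarith
    have hBn : B < n := by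
      have : B ≤ max B 0 := le_max_left _ _
      linarith
    set F : ℝ → ℝ := fun x => min (n * x) 1 with hFdef
    have hinv : (0:ℝ) < n⁻¹ := inv_pos.2 hn
    have hAF : ContinuousOn F (Set.Ici 0) ∧ F 0 = 0 ∧ IsPiecewisePoly F := by
      refine ⟨((continuous_const.mul continuous_id).min continuous_const).continuousOn, by
        simp [hFdef], ?_⟩
      refine ⟨{n⁻¹}, ?_⟩
      rintro x ⟨hx0, hxs⟩
      have hxne : x ≠ n⁻¹ := by simpa using hxs
      rcases lt_or_gt_of_ne hxne with h | h
      · refine ⟨n⁻¹ - x, by linarith, Polynomial.C n * Polynomial.X, ?_⟩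
        intro y hy hyx
        have : y - x < n⁻¹ - x := lt_of_le_of_lt (le_abs_self _) hyx
        have hylt : y < n⁻¹ := by linarith
        have : n * y < 1 := by
          have := mul_lt_mul_of_pos_left hylt hn
          rwa [mul_inv_cancel₀ (ne_of_gt hn)] at this
        simp [hFdef, min_eq_left (le_of_lt this)]
      · refine ⟨x - n⁻¹, by linarith, Polynomial.C 1, ?_⟩
        intro y hy hyx
        have h' : x - y ≤ |y - x| := by rw [abs_sub_comm]; exact le_abs_self _
        have : x - y < x - n⁻¹ := lt_of_le_of_lt h' hyx
        have hygt : n⁻¹ < y := by linarith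
        have h1 : 1 < n * y := by
          have := mul_lt_mul_of_pos_left hygt hn
          rwa [mul_inv_cancel₀ (ne_of_gt hn)] at this
        simp [hFdef, min_eq_right (le_of_lt h1)]
    have hD : HasDerivWithinAt F n (Set.Ici 0) 0 := by
      have hg : HasDerivWithinAt (fun y => n * y) n (Set.Ici 0) 0 := by
        simpa using ((hasDerivAt_id (0:ℝ)).const_mul n).hasDerivWithinAt
      refine hg.congr_of_eventuallyEq ?_ (by simp [hFdef])
      have hmem : Set.Iio n⁻¹ ∈ 𝓝[Set.Ici (0:ℝ)] (0:ℝ) := nhdsWithin_le_nhds (Iio_mem_nhds hinv)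
      filter_upwards [hmem] with y hy
      have : n * y < 1 := by
        have := mul_lt_mul_of_pos_left (show y < n⁻¹ from hy) hn
        rwa [mul_inv_cancel₀ (ne_of_gt hn)] at this
      simp [hFdef, min_eq_left (le_of_lt this)]
    refine ⟨n, ⟨F, hAF, ?_, ?_⟩, hBn⟩
    · intro x hx
      constructor
      · exact le_min (mul_nonneg (le_of_lt hn) hx) zero_le_one
      · exact min_le_right _ _
    · exact (hD.derivWithin udw).symm
end

section
/- In a commutative semiprime f-algebra B, any component of a positive von Neumann regular element is von Neumann regular: if 0 ≤ ω is such that ω²v = ω for some v ∈ B, and 0 ≤ ω₁ ≤ ω with ω₁ ∧ (ω - ω₁) = 0, then ω₁²v = ω₁. -/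
/-- Any component of a positive von Neumann regular element of a semiprime f-algebra
is von Neumann regular. -/
theorem stmt8 {B : Type*} [SemiprimeFRing B] (ω ω₁ v : B)
    (hω : 0 ≤ ω) (hvn : ω * ω * v = ω)
    (h1 : 0 ≤ ω₁) (h2 : ω₁ ≤ ω) (hcomp : ω₁ ⊓ (ω - ω₁) = 0) :
    ω₁ * ω₁ * v = ω₁ := by
  set ω₂ := ω - ω₁ with hω₂
  -- ω₂ ≥ 0
  have h02 : (0 : B) ≤ ω₂ := by
    have := SemiprimeFRing.add_le_add_left ω₁ ω h2 (-ω₁)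
    simpa [hω₂, neg_add_eq_sub] using this
  -- ω₁ * ω₂ = 0
  have step1 : (ω₂ * ω₁) ⊓ ω₂ = 0 := SemiprimeFRing.disjoint_mul_left ω₁ ω₂ ω₂ hcomp h02
  have step1' : ω₂ ⊓ (ω₂ * ω₁) = 0 := by rw [inf_comm]; exact step1
  have step2 : (ω₁ * ω₂) ⊓ (ω₂ * ω₁) = 0 :=
    SemiprimeFRing.disjoint_mul_left ω₂ (ω₂ * ω₁) ω₁ step1' h1
  have hx : ω₁ * ω₂ = 0 := by
    have h := step2
    rw [mul_comm ω₂ ω₁, inf_idem] at h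
    exact h
  -- hence ω₁ * ω = ω₁ * ω₁
  have hω1ω : ω₁ * ω = ω₁ * ω₁ := by
    have h : ω₁ * (ω - ω₁) = 0 := hx
    rw [mul_sub, sub_eq_zero] at h
    exact h
  -- ω₁^3 * v = ω₁^2
  have hωω1 : ω * ω₁ = ω₁ * ω₁ := by rw [mul_comm, hω1ω]
  have h3 : ω₁ * ω₁ * ω₁ * v = ω₁ * ω₁ := by
    have key : ω₁ * (ω * (ω * v)) = ω₁ * ω₁ * (ω₁ * v) := by
      rw [← mul_assoc ω₁ ω (ω * v), hω1ω, mul_assoc ω₁ ω₁ (ω * v), ← mul_assoc ω₁ ω v,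
        hω1ω, mul_assoc ω₁ ω₁ v, ← mul_assoc ω₁ ω₁ (ω₁ * v)]
    calc ω₁ * ω₁ * ω₁ * v = ω₁ * ω₁ * (ω₁ * v) := by rw [mul_assoc (ω₁ * ω₁) ω₁ v]
      _ = ω₁ * (ω * (ω * v)) := key.symm
      _ = ω₁ * (ω * ω * v) := by rw [mul_assoc ω ω v]
      _ = ω₁ * ω := by rw [hvn]
      _ = ω₁ * ω₁ := hω1ω
  have hd1 : ω₁ * (ω₁ * ω₁ * v - ω₁) = 0 := by
    rw [mul_sub, show ω₁ * (ω₁ * ω₁ * v) = ω₁ * ω₁ * ω₁ * v from by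
      simp only [mul_assoc], h3, sub_self]
  have hd2 : (ω₁ * ω₁ * v - ω₁) * (ω₁ * ω₁ * v - ω₁) = 0 := by
    have key : (ω₁ * ω₁ * v - ω₁) * (ω₁ * ω₁ * v - ω₁)
        = (ω₁ * v) * (ω₁ * (ω₁ * ω₁ * v - ω₁)) - (ω₁ * (ω₁ * ω₁ * v - ω₁)) := by
      simp only [mul_sub, sub_mul]
      have e1 : (ω₁ * ω₁ * v) * (ω₁ * ω₁ * v) = ω₁ * v * (ω₁ * (ω₁ * ω₁ * v)) := by
        simp only [mul_assoc, mul_comm, mul_left_comm]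
      have e2 : ω₁ * (ω₁ * ω₁ * v) = (ω₁ * ω₁ * v) * ω₁ := by
        rw [mul_comm]
      have e3 : ω₁ * v * (ω₁ * ω₁) = ω₁ * ω₁ * v * ω₁ := by
        simp only [mul_assoc, mul_comm, mul_left_comm]
      rw [e1, e2, e3]
    rw [key, hd1, mul_zero, sub_zero]
  have h0 := SemiprimeFRing.semiprime _ hd2
  exact sub_eq_zero.mp h0
end

section
/- Let C₁, C₂ : A → B be algebra homomorphisms between commutative semiprime f-algebras such that C₁(f)C₂(f) = 0 for all f ∈ A. Then C = C₁ + C₂ satisfies C(f²) = C(f)² for all f, and hence (by polarization in a commutative setting) C is an algebra homomorphism. -/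
/-- If `C₁, C₂` are algebra homomorphisms with `C₁(f)C₂(f) = 0` for all `f`, then
`C = C₁ + C₂` preserves squares, hence is an algebra homomorphism. -/
theorem stmt11 {A B : Type*} [SemiprimeFRing A] [SemiprimeFRing B] (C₁ C₂ : A → B)
    (h1add : ∀ x y : A, C₁ (x + y) = C₁ x + C₁ y)
    (h2add : ∀ x y : A, C₂ (x + y) = C₂ x + C₂ y)
    (h1mul : ∀ x y : A, C₁ (x * y) = C₁ x * C₁ y)
    (h2mul : ∀ x y : A, C₂ (x * y) = C₂ x * C₂ y)
    (horth : ∀ f : A, C₁ f * C₂ f = 0) :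
    (∀ f : A, C₁ (f * f) + C₂ (f * f) = (C₁ f + C₂ f) * (C₁ f + C₂ f)) ∧
      (∀ f g : A, C₁ (f * g) + C₂ (f * g) = (C₁ f + C₂ f) * (C₁ g + C₂ g)) := by
  have key : ∀ f g : A, C₁ f * C₂ g + C₁ g * C₂ f = 0 := by
    intro f g
    have h := horth (f + g)
    rw [h1add, h2add] at h
    have h' : C₁ f * C₂ f + (C₁ f * C₂ g + C₁ g * C₂ f) + C₁ g * C₂ g = 0 := by
      rw [← h, add_mul, mul_add, mul_add]; abel
    rw [horth f, horth g] at h'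
    simpa using h'
  constructor
  · intro f
    rw [h1mul, h2mul]
    have hk := key f f
    rw [add_mul, mul_add, mul_add, mul_comm (C₂ f) (C₁ f)]
    have : C₁ f * C₂ f = 0 := horth f
    rw [this]
    abel
  · intro f g
    rw [h1mul, h2mul]
    have hk := key f g
    rw [add_mul, mul_add, mul_add, mul_comm (C₂ f) (C₁ g)]
    have h0 : C₁ f * C₂ g + C₁ g * C₂ f = 0 := key f g
    have : C₁ f * C₁ g + C₁ f * C₂ g + (C₁ g * C₂ f + C₂ f * C₂ g)
        = C₁ f * C₁ g + C₂ f * C₂ g + (C₁ f * C₂ g + C₁ g * C₂ f) := by abel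
    rw [this, h0, add_zero, mul_comm (C₂ f) (C₂ g)]
end

section
/- Let B be a semiprime f-algebra and p ∈ B⁺. Suppose that for every unital f-algebra A with identity e and every regular separating operator T : A → B with T(e) = p, there exists an algebra homomorphism C : A → B with T = pC and pB = C(e)B. Then p is von Neumann regular. -/
instance : SemiprimeFRing1 ℤ where
  add_le_add_left := fun a b hab c => by omega
  mul_nonneg := fun a b ha hb => mul_nonneg ha hb
  disjoint_mul_left := fun a b c hab hc => by
    rcases le_total a b with hab' | hab'
    · have : a = 0 := by simpa [min_eq_left hab'] using hab
      simp [this]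
      omega
    · have hb0 : b = 0 := by simpa [min_eq_right hab'] using hab
      have ha0 : 0 ≤ a := by omega
      simp [hb0, min_eq_right (mul_nonneg hc ha0)]
  semiprime := fun a ha => by nlinarith
  arch := fun a b hab => by
    by_contra hpos
    push_neg at hpos
    have h1 : (b.toNat + 1) • a ≤ b := hab _
    have : ((b.toNat : ℤ) + 1) * a ≤ b := by
      simpa [nsmul_eq_mul] using h1
    nlinarith [Int.self_le_toNat b]

/-- Converse part of Theorem 6.1 of [AAB]: if `p ∈ B⁺` is such that every regular
separating operator `T : A → B` from a unital f-algebra with `T(e) = p` factors as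
`T = pC` with `C` an algebra homomorphism and `pB = C(e)B`, then `p` is von Neumann
regular. -/
theorem stmt14 {B : Type*} [SemiprimeFRing B] (p : B) (hp : 0 ≤ p)
    (h : ∀ (A : Type) [SemiprimeFRing1 A] (T : A → B),
      (∃ P Q : A → B, (∀ x y : A, P (x + y) = P x + P y) ∧
        (∀ x y : A, Q (x + y) = Q x + Q y) ∧ (∀ x : A, 0 ≤ x → 0 ≤ P x) ∧
        (∀ x : A, 0 ≤ x → 0 ≤ Q x) ∧ ∀ x : A, T x = P x - Q x) →
      (∀ f g : A, f * g = 0 → T f * T g = 0) →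
      T 1 = p →
      ∃ C : A → B, (∀ x y : A, C (x + y) = C x + C y) ∧
        (∀ x y : A, C (x * y) = C x * C y) ∧ (∀ f : A, T f = p * C f) ∧
        {b : B | ∃ x : B, b = p * x} = {b : B | ∃ x : B, b = C 1 * x}) :
    ∃ v : B, p * p * v = p := by
  -- auxiliary: sums of nonnegatives are nonnegative in B
  have add_nn : ∀ a b : B, 0 ≤ a → 0 ≤ b → 0 ≤ a + b := by
    intro a b ha hb
    have := SemiprimeFRing.add_le_add_left 0 b hb a
    rw [add_zero] at this
    exact ha.trans this
  have nsmul_nn : ∀ (n : ℕ), 0 ≤ n • p := by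
    intro n
    induction n with
    | zero => simp
    | succ k ih =>
      rw [succ_nsmul]
      exact add_nn _ _ ih hp
  have zsmul_nn : ∀ (x : ℤ), 0 ≤ x → 0 ≤ x • p := by
    intro x hx
    have : x • p = (x.toNat : ℤ) • p := by congr 1; omega
    rw [this, natCast_zsmul]
    exact nsmul_nn _
  obtain ⟨C, hCadd, hCmul, hfac, hset⟩ :=
    h ℤ (fun n => n • p)
      ⟨fun n => n • p, fun _ => 0,
        fun x y => add_zsmul p x y,
        fun _ _ => (add_zero (0:B)).symm,
        fun x hx => zsmul_nn x hx, fun _ _ => le_refl 0,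
        fun x => (sub_zero _).symm⟩
      (by
        intro f g hfg
        rcases mul_eq_zero.mp hfg with hf | hg
        · simp [hf]
        · simp [hg])
      (by simp)
  have hC1 : C 1 = C 1 * C 1 := by
    have := hCmul 1 1
    simpa using this
  have hmem : C 1 ∈ {b : B | ∃ x : B, b = C 1 * x} := ⟨C 1, hC1⟩
  rw [← hset] at hmem
  obtain ⟨x, hx⟩ := hmem
  have hp1 : p = p * C 1 := by simpa using hfac 1
  refine ⟨x, ?_⟩
  calc p * p * x = p * (p * x) := mul_assoc p p x
    _ = p * C 1 := by rw [← hx]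
    _ = p := hp1.symm
end

section
/- Let T, S : A → B be two almost contractive regular separating operators between semiprime f-algebras that belong to a common vector space of such operators (so T + S and T − S are also separating). Then T(f)S(g) = 0 for all f, g ∈ A with fg = 0. -/
/-- If `T, S` are almost contractive regular separating operators lying in a common
vector space of such operators (so `T + S` and `T - S` are separating as well), then
`T(f)S(g) = 0` whenever `fg = 0`. -/
theorem stmt16 {A B : Type*} [SemiprimeFRing A] [SemiprimeFRing B] (T S : A → B)
    (hTreg : ∃ P Q : A → B, (∀ x y : A, P (x + y) = P x + P y) ∧
      (∀ x y : A, Q (x + y) = Q x + Q y) ∧ (∀ x : A, 0 ≤ x → 0 ≤ P x) ∧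
      (∀ x : A, 0 ≤ x → 0 ≤ Q x) ∧ ∀ x : A, T x = P x - Q x)
    (hSreg : ∃ P Q : A → B, (∀ x y : A, P (x + y) = P x + P y) ∧
      (∀ x y : A, Q (x + y) = Q x + Q y) ∧ (∀ x : A, 0 ≤ x → 0 ≤ P x) ∧
      (∀ x : A, 0 ≤ x → 0 ≤ Q x) ∧ ∀ x : A, S x = P x - Q x)
    (hTac : ∃ ω : B, ∀ f : A, 0 ≤ f → f * f ≤ f → |T f| ≤ ω)
    (hSac : ∃ ω : B, ∀ f : A, 0 ≤ f → f * f ≤ f → |S f| ≤ ω)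
    (hTsep : ∀ f g : A, f * g = 0 → T f * T g = 0)
    (hSsep : ∀ f g : A, f * g = 0 → S f * S g = 0)
    (hTSsep : ∀ f g : A, f * g = 0 → (T f + S f) * (T g + S g) = 0)
    (hTSsep' : ∀ f g : A, f * g = 0 → (T f - S f) * (T g - S g) = 0) :
    ∀ f g : A, f * g = 0 → T f * S g = 0 := by
  intro f g hfg
  have h1 : T f * T g = 0 := hTsep f g hfg
  have h2 : S f * S g = 0 := hSsep f g hfg
  have h3 := hTSsep f g hfg
  have e : (T f + S f) * (T g + S g)
      = T f * T g + (T f * S g + S f * T g) + S f * S g := by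
    rw [add_mul, mul_add, mul_add]; abel
  rw [e, h1, h2, zero_add, add_zero] at h3
  have hx : T f * S g = -(S f * T g) := eq_neg_of_add_eq_zero_left h3
  have hsq : (T f * S g) * (T f * S g) = 0 := by
    calc (T f * S g) * (T f * S g) = (T f * S g) * -(S f * T g) := by rw [← hx]
    _ = -((T f * S g) * (T g * S f)) := by rw [mul_neg, mul_comm (S f)]
    _ = -((T f * T g) * (S g * S f)) := by rw [mul_mul_mul_comm]
    _ = 0 := by rw [h1, zero_mul, neg_zero]
  exact SemiprimeFRing.semiprime _ hsq
end
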